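/- Let A be a finite group acting transitively on a finite set X of cardinality n, let G be a normal subgroup of A acting transitively on X, and let a ∈ A be such that A is generated by G together with a. If (A,G,X) is not exceptional, i.e., there exist x ≠ y in X such that the A-orbit of the pair (x,y) on X × X equals its G-orbit, then the number of elements of the coset aG having no fixed point on X is at least |G|/n. -/

import Mathlib

open Finset MulAction

section Aux

lemma aux_filter {α : Type*} [Fintype α] (q : α → Prop) [DecidablePred q] :
    (Finset.univ.filter q).card = Set.ncard {x | q x} := by
  rw [Set.ncard_eq_toFinset_card', Set.toFinset_setOf]

lemma aux_double {α β : Type*} [Fintype α] [Fintype β] (p : α → Prop) (r : α → β → Prop)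
    [DecidablePred p] [∀ a, DecidablePred (r a)] :
    ∑ b ∈ Finset.univ.filter p, (Finset.univ.filter (r b)).card
      = ∑ x : β, (Finset.univ.filter (fun b => p b ∧ r b x)).card := by
  simp only [Finset.card_filter]
  rw [Finset.sum_filter]
  have : ∀ b : α, (if p b then ∑ x : β, if r b x then 1 else 0 else 0)
      = ∑ x : β, if p b ∧ r b x then 1 else 0 := by
    intro b
    by_cases hb : p b <;> simp [hb]
  simp only [this]
  exact Finset.sum_comm

variable {A : Type*} [Group A] [Fintype A] (G : Subgroup A) (a : A)

lemma aux_coset_card {Y : Type*} [MulAction A Y] (p : Y) (b₀ : A)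
    (h1 : a⁻¹ * b₀ ∈ G) (h2 : b₀ • p = p) :
    Set.ncard {b : A | a⁻¹ * b ∈ G ∧ b • p = p}
      = Set.ncard {g : A | g ∈ G ∧ g • p = p} := by
  have himg : {b : A | a⁻¹ * b ∈ G ∧ b • p = p}
      = (fun g => b₀ * g) '' {g : A | g ∈ G ∧ g • p = p} := by
    ext b
    constructor
    · rintro ⟨hb1, hb2⟩
      refine ⟨b₀⁻¹ * b, ⟨?_, ?_⟩, by group⟩
      · have hmem : (a⁻¹ * b₀)⁻¹ * (a⁻¹ * b) ∈ G := G.mul_mem (G.inv_mem h1) hb1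
        have heq : (a⁻¹ * b₀)⁻¹ * (a⁻¹ * b) = b₀⁻¹ * b := by group
        rwa [heq] at hmem
      · rw [mul_smul, hb2, inv_smul_eq_iff, h2]
    · rintro ⟨g, ⟨hg1, hg2⟩, rfl⟩
      constructor
      · have : (a⁻¹ * b₀) * g ∈ G := G.mul_mem h1 hg1
        rwa [mul_assoc] at this
      · rw [mul_smul, hg2, h2]
  rw [himg, Set.ncard_image_of_injective _ (mul_right_injective b₀)]

lemma aux_orbit_stab {Y : Type*} [MulAction A Y] (p : Y) :
    Set.ncard {g : A | g ∈ G ∧ g • p = p} * Set.ncard (MulAction.orbit G p)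
      = Nat.card G := by
  have e : {g : A | g ∈ G ∧ g • p = p} ≃ MulAction.stabilizer G p :=
    { toFun := fun x => ⟨⟨x.1, x.2.1⟩, by
        have := x.2.2
        simp only [MulAction.mem_stabilizer_iff, Submonoid.smul_def]
        exact this⟩
      invFun := fun x => ⟨(x.1 : A), x.1.2, by
        have := x.2
        simpa only [MulAction.mem_stabilizer_iff, Submonoid.smul_def, Subgroup.smul_def] using this⟩
      left_inv := fun x => rfl
      right_inv := fun x => rfl }
  have h1 : Set.ncard {g : A | g ∈ G ∧ g • p = p} = Nat.card (MulAction.stabilizer G p) := by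
    rw [← Nat.card_coe_set_eq]
    exact Nat.card_congr e
  have h2 : Set.ncard (MulAction.orbit G p) = Nat.card (G ⧸ MulAction.stabilizer G p) := by
    rw [← Nat.card_coe_set_eq]
    exact Nat.card_congr (MulAction.orbitEquivQuotientStabilizer G p)
  rw [h1, h2, mul_comm]
  exact (Subgroup.card_eq_card_quotient_mul_card_subgroup _).symm

lemma aux_coset_ncard : Set.ncard {b : A | a⁻¹ * b ∈ G} = Nat.card G := by
  have himg : {b : A | a⁻¹ * b ∈ G} = (fun g => a * g) '' (G : Set A) := by
    ext b
    constructor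
    · intro hb
      exact ⟨a⁻¹ * b, hb, by group⟩
    · rintro ⟨g, hg, rfl⟩
      simpa [← mul_assoc] using hg
  rw [himg, Set.ncard_image_of_injective _ (mul_right_injective a), ← Nat.card_coe_set_eq]
  rfl

end Aux

/-- Let `A` act transitively on a finite set `X` of cardinality `n`, let `G ⊴ A` also
act transitively, and let `a ∈ A` be such that `A` is generated by `G` together with
`a`.  If `(A,G,X)` is not exceptional — i.e. there exist `x ≠ y` in `X` whose pair
`(x,y)` has the same `A`-orbit and `G`-orbit in `X × X` — then the number of
derangements in the coset `aG` is at least `|G|/n`. -/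
theorem coset_derangements_ge_of_not_exceptional
    (A : Type*) [Group A] [Fintype A] (X : Type*) [Fintype X] [MulAction A X]
    [MulAction.IsPretransitive A X]
    (G : Subgroup A) [G.Normal]
    (hGtrans : ∀ x y : X, ∃ g ∈ G, g • x = y)
    (a : A) (hgen : Subgroup.closure (insert a (G : Set A)) = ⊤)
    (hne : ∃ x y : X, x ≠ y ∧
      MulAction.orbit A ((x, y) : X × X) = MulAction.orbit G ((x, y) : X × X)) :
    (Nat.card G : ℝ) / Fintype.card X ≤
      (Set.ncard {b : A | a⁻¹ * b ∈ G ∧ ∀ x : X, b • x ≠ x} : ℝ) := by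
  classical
  obtain ⟨x₀, y₀, hxy, horb⟩ := hne
  have hN : G.Normal := inferInstance
  set n := Fintype.card X with hn
  have hX : Nonempty X := ⟨x₀⟩
  have hn0 : 0 < n := Fintype.card_pos
  set C : Finset A := Finset.univ.filter (fun b => a⁻¹ * b ∈ G) with hC
  set f : A → ℕ := fun b => (Finset.univ.filter (fun x : X => b • x = x)).card with hf
  set O : Set (X × X) := MulAction.orbit A (x₀, y₀) with hO
  set g : A → ℕ :=
    fun b => (Finset.univ.filter (fun p : X × X => p ∈ O ∧ b • p = p)).card with hg
  set m := Set.ncard O with hm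
  -- cardinality of the coset
  have hCcard : C.card = Nat.card G := by
    rw [hC, aux_filter]; exact aux_coset_ncard G a
  -- per-point count on X
  have hx : ∀ x : X,
      (Finset.univ.filter (fun b => a⁻¹ * b ∈ G ∧ b • x = x)).card * n = Nat.card G := by
    intro x
    obtain ⟨g₁, hg₁, hg₁x⟩ := hGtrans (a • x) x
    have hb₀G : a⁻¹ * (g₁ * a) ∈ G := by
      have := hN.conj_mem g₁ hg₁ a⁻¹
      simpa [mul_assoc] using this
    have hb₀x : (g₁ * a) • x = x := by rw [mul_smul, hg₁x]
    have horbx : MulAction.orbit G x = Set.univ := by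
      apply Set.eq_univ_iff_forall.mpr
      intro y
      obtain ⟨g₂, hg₂, hg₂y⟩ := hGtrans x y
      exact ⟨⟨g₂, hg₂⟩, by simpa [Submonoid.smul_def] using hg₂y⟩
    have key := aux_orbit_stab G (Y := X) x
    rw [horbx, Set.ncard_univ, Nat.card_eq_fintype_card] at key
    rw [aux_filter, aux_coset_card G a x (g₁ * a) hb₀G hb₀x]
    exact key
  -- first double counting : ∑_{b ∈ C} f b = |G|
  have hS1 : ∑ b ∈ C, f b = Nat.card G := by
    apply Nat.eq_of_mul_eq_mul_left hn0
    rw [hC, hf]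
    rw [aux_double (fun b => a⁻¹ * b ∈ G) (fun b (x : X) => b • x = x), Finset.mul_sum]
    have : ∀ x : X, n * (Finset.univ.filter (fun b => a⁻¹ * b ∈ G ∧ b • x = x)).card
        = Nat.card G := by
      intro x; rw [mul_comm]; exact hx x
    simp only [this]
    simp [hn, mul_comm]
  -- per-point count on the orbit O
  have hpO_ne : ∀ p : X × X, p ∈ O → p.1 ≠ p.2 := by
    rintro p ⟨c, hc⟩ hpe
    apply hxy
    have h1 : c • x₀ = p.1 := congrArg Prod.fst hc
    have h2 : c • y₀ = p.2 := congrArg Prod.snd hc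
    have : c • x₀ = c • y₀ := by rw [h1, h2, hpe]
    exact smul_left_cancel c this
  have hp : ∀ p : X × X, p ∈ O →
      (Finset.univ.filter (fun b => a⁻¹ * b ∈ G ∧ b • p = p)).card * m = Nat.card G := by
    intro p hp
    have horbAp : MulAction.orbit A p = O := MulAction.orbit_eq_iff.mpr hp
    have hpG : p ∈ MulAction.orbit G (x₀, y₀) := horb ▸ hp
    have horbGp : MulAction.orbit G p = O := by
      rw [horb]; exact MulAction.orbit_eq_iff.mpr hpG
    -- find a coset element fixing p
    have hap : a • p ∈ MulAction.orbit G p := by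
      rw [horbGp, ← horbAp]; exact MulAction.mem_orbit p a
    obtain ⟨g₂, hg₂⟩ := hap
    have hg₂' : (g₂ : A) • p = a • p := by
      simpa [Submonoid.smul_def, Subgroup.smul_def] using hg₂
    have hb₀G : a⁻¹ * ((g₂ : A)⁻¹ * a) ∈ G := by
      have := hN.conj_mem _ (G.inv_mem g₂.2) a⁻¹
      simpa [mul_assoc] using this
    have hb₀p : ((g₂ : A)⁻¹ * a) • p = p := by
      rw [mul_smul, ← hg₂', inv_smul_smul]
    have key := aux_orbit_stab G (Y := X × X) p
    rw [horbGp, ← hm] at key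
    rw [aux_filter, aux_coset_card G a p ((g₂ : A)⁻¹ * a) hb₀G hb₀p]
    exact key
  have hm0 : 0 < m := by
    rw [hm]
    exact (Set.ncard_pos (Set.toFinite O)).mpr ⟨(x₀, y₀), MulAction.mem_orbit_self _⟩
  -- second double counting : ∑_{b ∈ C} g b = |G|
  have hS2 : ∑ b ∈ C, g b = Nat.card G := by
    apply Nat.eq_of_mul_eq_mul_left hm0
    rw [hC, hg]
    rw [aux_double (fun b => a⁻¹ * b ∈ G) (fun b (p : X × X) => p ∈ O ∧ b • p = p),
      Finset.mul_sum]
    have hterm : ∀ p : X × X,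
        m * (Finset.univ.filter (fun b => a⁻¹ * b ∈ G ∧ p ∈ O ∧ b • p = p)).card
          = if p ∈ O then Nat.card G else 0 := by
      intro p
      by_cases hpmem : p ∈ O
      · rw [if_pos hpmem]
        have : (Finset.univ.filter (fun b => a⁻¹ * b ∈ G ∧ p ∈ O ∧ b • p = p))
            = (Finset.univ.filter (fun b => a⁻¹ * b ∈ G ∧ b • p = p)) := by
          apply Finset.filter_congr
          intro b _
          simp [hpmem]
        rw [this, mul_comm]
        exact hp p hpmem
      · rw [if_neg hpmem]
        have : (Finset.univ.filter (fun b => a⁻¹ * b ∈ G ∧ p ∈ O ∧ b • p = p)) = ∅ := by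
          apply Finset.filter_eq_empty_iff.mpr
          intro b _
          rintro ⟨-, hmem, -⟩
          exact hpmem hmem
        simp [this]
    simp only [hterm]
    rw [← Finset.sum_filter, Finset.sum_const, smul_eq_mul]
    have hOf : (Finset.univ.filter (fun p : X × X => p ∈ O)).card = m := by
      rw [aux_filter, hm, Set.setOf_mem_eq]
    rw [hOf]
  -- pointwise inequality : g b ≤ n * (f b - 1)
  have hpoint : ∀ b : A, g b ≤ n * (f b - 1) := by
    intro b
    by_cases hb : f b = 0
    · have hgb : g b = 0 := by
        rw [hg, Finset.card_eq_zero, Finset.filter_eq_empty_iff]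
        rintro p - ⟨hpO, hpfix⟩
        have h1 : b • p.1 = p.1 := congrArg Prod.fst hpfix
        have : p.1 ∈ Finset.univ.filter (fun x : X => b • x = x) :=
          Finset.mem_filter.mpr ⟨Finset.mem_univ _, h1⟩
        rw [hf] at hb
        simp only [Finset.card_eq_zero] at hb
        rw [hb] at this
        exact absurd this (Finset.notMem_empty _)
      rw [hgb]; exact Nat.zero_le _
    · have h1 : 1 ≤ f b := Nat.one_le_iff_ne_zero.mpr hb
      have hfn : f b ≤ n := by
        rw [hf, hn]
        simpa using Finset.card_filter_le Finset.univ (fun x : X => b • x = x)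
      have hsub : Finset.univ.filter (fun p : X × X => p ∈ O ∧ b • p = p)
          ⊆ (Finset.univ.filter (fun x : X => b • x = x)).offDiag := by
        intro p hp'
        rw [Finset.mem_filter] at hp'
        obtain ⟨-, hpO, hpfix⟩ := hp'
        rw [Finset.mem_offDiag]
        exact ⟨Finset.mem_filter.mpr ⟨Finset.mem_univ _, congrArg Prod.fst hpfix⟩,
          Finset.mem_filter.mpr ⟨Finset.mem_univ _, congrArg Prod.snd hpfix⟩,
          hpO_ne p hpO⟩
      calc g b ≤ (Finset.univ.filter (fun x : X => b • x = x)).offDiag.card :=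
            Finset.card_le_card hsub
        _ = f b * f b - f b := by rw [Finset.offDiag_card]
        _ = f b * (f b - 1) := by
            rcases Nat.exists_eq_succ_of_ne_zero hb with ⟨k, hk⟩
            rw [hk]
            simp [Nat.succ_sub_one, Nat.succ_mul, Nat.mul_succ]
        _ ≤ n * (f b - 1) := Nat.mul_le_mul_right _ hfn
  -- the derangement set
  set D : Finset A := Finset.univ.filter (fun b => a⁻¹ * b ∈ G ∧ ∀ x : X, b • x ≠ x)
    with hD
  have hDcard : Set.ncard {b : A | a⁻¹ * b ∈ G ∧ ∀ x : X, b • x ≠ x} = D.card := by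
    rw [hD, aux_filter]
  have hDalt : D = C.filter (fun b => f b = 0) := by
    rw [hD, hC, Finset.filter_filter]
    apply Finset.filter_congr
    intro b _
    constructor
    · rintro ⟨hb1, hb2⟩
      refine ⟨hb1, ?_⟩
      rw [hf]
      simp only [Finset.card_eq_zero, Finset.filter_eq_empty_iff]
      intro x _
      exact hb2 x
    · rintro ⟨hb1, hb2⟩
      refine ⟨hb1, ?_⟩
      rw [hf] at hb2
      simp only [Finset.card_eq_zero, Finset.filter_eq_empty_iff] at hb2
      intro x
      exact hb2 (Finset.mem_univ x)
  -- key sum computation : ∑_{b ∈ C} (f b - 1) = D.card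
  have hsum : ∑ b ∈ C, (f b - 1) = D.card := by
    have hsplit := Finset.sum_filter_add_sum_filter_not C (fun b => f b = 0)
      (fun b => f b - 1)
    have hzero : ∑ b ∈ C.filter (fun b => f b = 0), (f b - 1) = 0 := by
      apply Finset.sum_eq_zero
      intro b hb'
      rw [Finset.mem_filter] at hb'
      simp [hb'.2]
    have hfsplit := Finset.sum_filter_add_sum_filter_not C (fun b => f b = 0)
      (fun b => f b)
    have hfzero : ∑ b ∈ C.filter (fun b => f b = 0), f b = 0 := by
      apply Finset.sum_eq_zero
      intro b hb'
      exact (Finset.mem_filter.mp hb').2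
    have hfpos : ∑ b ∈ C.filter (fun b => ¬ f b = 0), f b = Nat.card G := by
      rw [← hS1, ← hfsplit, hfzero, zero_add]
    have hcards := Finset.card_filter_add_card_filter_not (s := C)
      (p := fun b => f b = 0)
    have hpossum : ∑ b ∈ C.filter (fun b => ¬ f b = 0), (f b - 1)
        = Nat.card G - (C.filter (fun b => ¬ f b = 0)).card := by
      rw [Finset.sum_tsub_distrib]
      · rw [hfpos, Finset.sum_const, smul_eq_mul, mul_one]
      · intro b hb'
        exact Nat.one_le_iff_ne_zero.mpr (Finset.mem_filter.mp hb').2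
    have hcardD : (C.filter (fun b => f b = 0)).card = D.card := by rw [hDalt]
    have hcardpos : (C.filter (fun b => ¬ f b = 0)).card = Nat.card G - D.card := by
      omega
    rw [← hsplit, hzero, zero_add, hpossum, hcardpos]
    have hDle : D.card ≤ Nat.card G := by
      rw [hDalt, ← hCcard]
      exact Finset.card_le_card (Finset.filter_subset _ _)
    omega
  -- main inequality in ℕ
  have hfinal : Nat.card G ≤ n * D.card := by
    calc Nat.card G = ∑ b ∈ C, g b := hS2.symm
      _ ≤ ∑ b ∈ C, n * (f b - 1) := Finset.sum_le_sum (fun b _ => hpoint b)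
      _ = n * ∑ b ∈ C, (f b - 1) := (Finset.mul_sum _ _ _).symm
      _ = n * D.card := by rw [hsum]
  -- conclude over ℝ
  rw [hDcard]
  rw [div_le_iff₀ (by exact_mod_cast hn0)]
  calc (Nat.card G : ℝ) ≤ (n * D.card : ℕ) := by exact_mod_cast hfinal
    _ = (D.card : ℝ) * n := by push_cast; ring
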